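/- EQ1 and PO can be incompatible: in the instance with three agents and six goods where agent a_1 values g_1, g_2, g_3 at 1 each and g_4, g_5, g_6 at 0, while agents a_2 and a_3 each value g_1, g_2, g_3 at 0 and g_4, g_5, g_6 at 1 each (all valuations additive), there is no allocation that is simultaneously equitable up to one good (EQ1) and Pareto optimal (PO). -/

import Mathlib

open Finset

/-- The valuations of the three agents over the six goods: agent 1 values the first three
goods at 1 each, agents 2 and 3 value the last three goods at 1 each. -/
noncomputable def vEQ : Fin 3 → Fin 6 → ℝ :=
  ![![1, 1, 1, 0, 0, 0], ![0, 0, 0, 1, 1, 1], ![0, 0, 0, 1, 1, 1]]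

lemma vEQ_nonneg (i : Fin 3) (g : Fin 6) : 0 ≤ vEQ i g := by
  fin_cases i <;> fin_cases g <;> norm_num [vEQ, Matrix.vecHead, Matrix.vecTail]

lemma vEQ0_le_one (g : Fin 6) : vEQ 0 g ≤ 1 := by
  fin_cases g <;> norm_num [vEQ, Matrix.vecHead, Matrix.vecTail]

lemma vEQ_low (g : Fin 6) (hg : (g : ℕ) < 3) :
    vEQ 0 g = 1 ∧ vEQ 1 g = 0 ∧ vEQ 2 g = 0 := by
  fin_cases g <;> first | rfl | simp_all [vEQ, Matrix.vecHead, Matrix.vecTail]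

lemma vEQ21 (g : Fin 6) : vEQ 2 g = vEQ 1 g := by
  fin_cases g <;> norm_num [vEQ, Matrix.vecHead, Matrix.vecTail] <;> rfl

lemma vEQ_high (g : Fin 6) (hg : 3 ≤ (g : ℕ)) : vEQ 1 g = 1 := by
  fin_cases g <;> first | rfl | simp_all [vEQ, Matrix.vecHead, Matrix.vecTail]

/-- EQ1 and PO can be incompatible: in this instance there is no allocation
that is simultaneously equitable up to one good (EQ1) and Pareto optimal (PO). -/
theorem no_eq1_and_po :
    ¬ ∃ A : Fin 3 → Finset (Fin 6),
      ((∀ i j, i ≠ j → Disjoint (A i) (A j)) ∧ Finset.univ.biUnion A = Finset.univ) ∧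
      -- EQ1
      (∀ i j : Fin 3, (A j).Nonempty →
        ∃ g ∈ A j, ∑ x ∈ (A j).erase g, vEQ j x ≤ ∑ x ∈ A i, vEQ i x) ∧
      -- PO
      (¬ ∃ B : Fin 3 → Finset (Fin 6),
        ((∀ i j, i ≠ j → Disjoint (B i) (B j)) ∧ Finset.univ.biUnion B = Finset.univ) ∧
        (∀ i, ∑ g ∈ A i, vEQ i g ≤ ∑ g ∈ B i, vEQ i g) ∧
        (∃ j, ∑ g ∈ A j, vEQ j g < ∑ g ∈ B j, vEQ j g)) := by
  rintro ⟨A, ⟨hdisj, hcover⟩, hEQ1, hPO⟩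
  have hmem : ∀ g : Fin 6, ∃ i, g ∈ A i := by
    intro g
    have : g ∈ Finset.univ.biUnion A := hcover ▸ Finset.mem_univ g
    simpa using this
  -- Step 1: goods 0,1,2 belong to A 0 (by Pareto optimality)
  have h012 : ∀ g : Fin 6, (g : ℕ) < 3 → g ∈ A 0 := by
    intro g hg
    by_contra hng
    obtain ⟨i, hi⟩ := hmem g
    have hi0 : i ≠ 0 := by rintro rfl; exact hng hi
    obtain ⟨hv0, hv1, hv2⟩ := vEQ_low g hg
    have hvi0 : ∀ j : Fin 3, j ≠ 0 → vEQ j g = 0 := by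
      intro j hj
      fin_cases j
      · exact absurd rfl hj
      · exact hv1
      · exact hv2
    apply hPO
    refine ⟨fun k => if k = 0 then insert g (A 0) else (A k).erase g, ⟨?_, ?_⟩, ?_, ?_⟩
    · intro k l hkl
      rcases eq_or_ne k 0 with rfl | hk <;> rcases eq_or_ne l 0 with rfl | hl
      · exact absurd rfl hkl
      · simp only [if_pos rfl, if_true, if_neg hl]
        rw [Finset.disjoint_insert_left]
        exact ⟨Finset.notMem_erase g _, (hdisj 0 l (Ne.symm hl)).mono_right (Finset.erase_subset _ _)⟩
      · simp only [if_pos rfl, if_true, if_neg hk]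
        rw [Finset.disjoint_insert_right]
        exact ⟨Finset.notMem_erase g _, (hdisj k 0 hk).mono_left (Finset.erase_subset _ _)⟩
      · simp only [if_neg hk, if_neg hl]
        exact (hdisj k l hkl).mono (Finset.erase_subset _ _) (Finset.erase_subset _ _)
    · apply Finset.eq_univ_iff_forall.2
      intro x
      rw [Finset.mem_biUnion]
      rcases eq_or_ne x g with rfl | hx
      · exact ⟨0, Finset.mem_univ _, by simp⟩
      · obtain ⟨k, hk⟩ := hmem x
        rcases eq_or_ne k 0 with rfl | hk0
        · exact ⟨0, Finset.mem_univ _, by simp [Finset.mem_insert, hk]⟩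
        · exact ⟨k, Finset.mem_univ _, by simp [if_neg hk0, Finset.mem_erase, hx, hk]⟩
    · intro k
      rcases eq_or_ne k 0 with rfl | hk0
      · simp only [if_pos rfl, if_true]
        rw [Finset.sum_insert hng]
        linarith [vEQ_nonneg 0 g]
      · simp only [if_neg hk0]
        rw [Finset.sum_erase _ (hvi0 k hk0)]
    · refine ⟨0, ?_⟩
      simp only [if_pos rfl, if_true]
      rw [Finset.sum_insert hng, hv0]
      linarith
  -- Step 2: agent 0's value is at least 3
  have hsub : ({0, 1, 2} : Finset (Fin 6)) ⊆ A 0 := by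
    intro x hx
    fin_cases hx <;> exact h012 _ (by norm_num)
  have h3 : (3 : ℝ) ≤ ∑ x ∈ A 0, vEQ 0 x := by
    have := Finset.sum_le_sum_of_subset_of_nonneg hsub
      (fun x _ _ => vEQ_nonneg 0 x) (f := vEQ 0)
    have hval : ∑ x ∈ ({0, 1, 2} : Finset (Fin 6)), vEQ 0 x = 3 := by
      rw [Finset.sum_insert (by decide), Finset.sum_insert (by decide), Finset.sum_singleton,
        (vEQ_low 0 (by norm_num)).1, (vEQ_low 1 (by norm_num)).1, (vEQ_low 2 (by norm_num)).1]
      norm_num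
    linarith
  -- Step 3: agents 1 and 2 together get at most 3
  have h12 : ∑ x ∈ A 1, vEQ 1 x + ∑ x ∈ A 2, vEQ 2 x ≤ 3 := by
    have hd : Disjoint (A 1) (A 2) := hdisj 1 2 (by decide)
    have h2eq : ∑ x ∈ A 2, vEQ 2 x = ∑ x ∈ A 2, vEQ 1 x :=
      Finset.sum_congr rfl fun x _ => vEQ21 x
    rw [h2eq, ← Finset.sum_union hd]
    have hle : ∑ x ∈ A 1 ∪ A 2, vEQ 1 x ≤ ∑ x ∈ (Finset.univ : Finset (Fin 6)), vEQ 1 x :=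
      Finset.sum_le_sum_of_subset_of_nonneg (Finset.subset_univ _)
        (fun x _ _ => vEQ_nonneg 1 x)
    have huniv : ∑ x ∈ (Finset.univ : Finset (Fin 6)), vEQ 1 x = 3 := by
      rw [Fin.sum_univ_six, (vEQ_low 0 (by norm_num)).2.1, (vEQ_low 1 (by norm_num)).2.1,
        (vEQ_low 2 (by norm_num)).2.1, vEQ_high 3 (by decide), vEQ_high 4 (by decide),
        vEQ_high 5 (by decide)]
      norm_num
    linarith
  -- Step 4: one of agents 1, 2 has value ≤ 3/2
  have hone : ∃ i : Fin 3, ∑ x ∈ A i, vEQ i x ≤ 3 / 2 := by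
    by_contra h
    push_neg at h
    linarith [h 1, h 2]
  obtain ⟨i, hi⟩ := hone
  -- Step 5: EQ1 between i and 0 fails
  have hne : (A 0).Nonempty := ⟨0, h012 0 (by norm_num)⟩
  obtain ⟨g, hg, hle⟩ := hEQ1 i 0 hne
  rw [Finset.sum_erase_eq_sub hg] at hle
  linarith [vEQ0_le_one g]
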